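/- Let Y = (Y_t)_{t≥0} be a real-valued Lévy process (càdlàg paths, Y_0 = 0 a.s., independent and stationary increments) such that Y_t is integrable with E[Y_t] = 0 for every t > 0. Then for every t ≥ 0, E[e^{Y*_t}] ≤ 8·E[e^{|Y_t|}], where Y*_t = sup_{0≤s≤t} |Y_s| and the inequality is understood in [0, ∞]. -/

import Mathlib

open MeasureTheory ProbabilityTheory Filter

noncomputable section

/-- The running supremum `L̄_t = sup_{0 ≤ s ≤ t} L_s` of a process. -/
def supProc {Ω : Type*} (L : ℝ → Ω → ℝ) (t : ℝ) (ω : Ω) : ℝ :=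
  ⨆ s : Set.Icc (0 : ℝ) t, L s.1 ω

/-- The running infimum `L̲_t = inf_{0 ≤ s ≤ t} L_s` of a process. -/
def infProc {Ω : Type*} (L : ℝ → Ω → ℝ) (t : ℝ) (ω : Ω) : ℝ :=
  ⨅ s : Set.Icc (0 : ℝ) t, L s.1 ω

/-- `ᾱ(M) = M|b| + cM²/2 + ∫ |e^{Mx} − 1 − Mx| λ(dx)`. -/
def alphaUp (b c M : ℝ) (ν : Measure ℝ) : ℝ :=
  M * |b| + c * M ^ 2 / 2 + ∫ x : ℝ, |Real.exp (M * x) - 1 - M * x| ∂ν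

/-- `α̲(M) = M|b| + cM²/2 + ∫ |e^{−Mx} − 1 + Mx| λ(dx)`. -/
def alphaDown (b c M : ℝ) (ν : Measure ℝ) : ℝ :=
  M * |b| + c * M ^ 2 / 2 + ∫ x : ℝ, |Real.exp (-M * x) - 1 + M * x| ∂ν

/-- The cumulant generating function `κ(u) = ub + u²c/2 + ∫ (e^{ux} − 1 − ux) λ(dx)`. -/
def kappaFn (b c : ℝ) (ν : Measure ℝ) (u : ℝ) : ℝ :=
  u * b + u ^ 2 * c / 2 + ∫ x : ℝ, (Real.exp (u * x) - 1 - u * x) ∂ν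

open ENNReal Set Finset

set_option maxHeartbeats 1000000

lemma lem_ge_one {Ω : Type*} [MeasurableSpace Ω] (μ : Measure Ω) [IsProbabilityMeasure μ]
    (X : Ω → ℝ) (hX : Measurable X) (hint : Integrable X μ) (hmean : ∫ ω, X ω ∂μ = 0) :
    1 ≤ ∫⁻ ω, ENNReal.ofReal (Real.exp (X ω)) ∂μ := by
  by_cases hI : Integrable (fun ω => Real.exp (X ω)) μ
  · rw [← ofReal_integral_eq_lintegral_ofReal hI (ae_of_all _ fun ω => (Real.exp_pos _).le)]
    have h1 : (1 : ℝ) ≤ ∫ ω, Real.exp (X ω) ∂μ := by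
      have : ∫ ω, (1 + X ω) ∂μ ≤ ∫ ω, Real.exp (X ω) ∂μ := by
        refine integral_mono ((integrable_const 1).add hint) hI fun ω => ?_
        simpa [add_comm] using Real.add_one_le_exp (X ω)
      rwa [integral_add (integrable_const 1) hint, hmean, integral_const, probReal_univ,
        smul_eq_mul, mul_one, add_zero] at this
    calc (1:ℝ≥0∞) = ENNReal.ofReal 1 := by simp
    _ ≤ _ := ENNReal.ofReal_le_ofReal h1
  · have htop : ∫⁻ ω, ENNReal.ofReal (Real.exp (X ω)) ∂μ = ⊤ := by
      by_contra h
      exact hI ⟨(Real.measurable_exp.comp hX).aestronglyMeasurable,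
        (hasFiniteIntegral_iff_ofReal (ae_of_all _ fun ω => (Real.exp_pos _).le)).2
          (lt_top_iff_ne_top.2 h)⟩
    simp [htop]

lemma lem_doobL2 {Ω : Type*} [MeasurableSpace Ω] (μ : Measure Ω) [IsProbabilityMeasure μ]
    (Z : Ω → ℝ) (W : Ω → ℝ≥0∞) (hZ : Measurable Z) (hZnn : ∀ ω, 0 ≤ Z ω) (hW : Measurable W)
    (hkey : ∀ l : ℝ, 0 < l →
      ENNReal.ofReal l * μ {ω | l ≤ Z ω} ≤ ∫⁻ ω in {ω | l ≤ Z ω}, W ω ∂μ) :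
    ∫⁻ ω, ENNReal.ofReal (Z ω ^ 2) ∂μ ≤ 4 * ∫⁻ ω, (W ω) ^ (2:ℝ) ∂μ := by
  set B := ∫⁻ ω, (W ω) ^ (2:ℝ) ∂μ with hB
  -- truncated bound
  have stepK : ∀ K : ℝ, 0 < K →
      ∫⁻ ω, ENNReal.ofReal (min (Z ω) K ^ 2) ∂μ ≤ 4 * B := by
    intro K hK
    set f := fun ω => min (Z ω) K with hf
    have hfm : Measurable f := hZ.min measurable_const
    have hfnn : ∀ ω, 0 ≤ f ω := fun ω => le_min (hZnn ω) hK.le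
    set A := ∫⁻ ω, ENNReal.ofReal (f ω ^ 2) ∂μ with hA
    have hAle : A ≤ ENNReal.ofReal (K ^ 2) := by
      calc A ≤ ∫⁻ _, ENNReal.ofReal (K ^ 2) ∂μ := by
              refine lintegral_mono fun ω => ENNReal.ofReal_le_ofReal ?_
              exact pow_le_pow_left₀ (hfnn ω) (min_le_right _ _) 2
        _ = ENNReal.ofReal (K ^ 2) := by simp
    have hAtop : A ≠ ⊤ := (lt_of_le_of_lt hAle ENNReal.ofReal_lt_top).ne
    -- layer cake
    have lc : A = ENNReal.ofReal 2 *
        ∫⁻ t in Ioi (0:ℝ), μ {a | t ≤ f a} * ENNReal.ofReal t := by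
      have h2 := lintegral_rpow_eq_lintegral_meas_le_mul μ (ae_of_all _ hfnn)
        hfm.aemeasurable (p := 2) (by norm_num)
      have e1 : ∀ x : ℝ, 0 ≤ x → x ^ (2:ℝ) = x ^ 2 := by
        intro x hx
        rw [show (2:ℝ) = ((2:ℕ):ℝ) by norm_num, Real.rpow_natCast]
      calc A = ∫⁻ ω, ENNReal.ofReal (f ω ^ (2:ℝ)) ∂μ := by
              refine lintegral_congr fun ω => by rw [e1 _ (hfnn ω)]
        _ = ENNReal.ofReal 2 * ∫⁻ t in Ioi (0:ℝ),
              μ {a | t ≤ f a} * ENNReal.ofReal (t ^ (2-1:ℝ)) := h2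
        _ = _ := by
              congr 1
              refine lintegral_congr fun t => by norm_num
    -- bound the tail integral by swapped double integral
    have key2 : ∫⁻ t in Ioi (0:ℝ), μ {a | t ≤ f a} * ENNReal.ofReal t
        ≤ ∫⁻ ω, W ω * ENNReal.ofReal (f ω) ∂μ := by
      have hGm : Measurable (fun p : ℝ × Ω => Set.indicator {p : ℝ × Ω | p.1 ≤ f p.2}
          (fun q => W q.2) p) := by
        exact (hW.comp measurable_snd).indicator
          (measurableSet_le measurable_fst (hfm.comp measurable_snd))
      have step1 : ∫⁻ t in Ioi (0:ℝ), μ {a | t ≤ f a} * ENNReal.ofReal t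
          ≤ ∫⁻ t in Ioi (0:ℝ), ∫⁻ ω, Set.indicator {p : ℝ × Ω | p.1 ≤ f p.2}
              (fun q => W q.2) (t, ω) ∂μ := by
        refine lintegral_mono_ae ?_
        filter_upwards [self_mem_ae_restrict (measurableSet_Ioi : MeasurableSet (Ioi (0:ℝ)))]
          with t ht
        rcases le_or_gt t K with htK | htK
        · have hset : {a | t ≤ f a} = {a | t ≤ Z a} := by
            ext a; simp only [hf, mem_setOf_eq, le_min_iff]
            exact ⟨fun h => h.1, fun h => ⟨h, htK⟩⟩
          have hbb : ∀ ω, Set.indicator {p : ℝ × Ω | p.1 ≤ f p.2} (fun q => W q.2) (t, ω)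
              = Set.indicator {a | t ≤ f a} W ω := by
            intro ω
            by_cases h : t ≤ f ω <;> simp [Set.indicator_apply, h]
          rw [mul_comm]
          calc ENNReal.ofReal t * μ {a | t ≤ f a}
              ≤ ∫⁻ ω in {a | t ≤ f a}, W ω ∂μ := by rw [hset]; exact hkey t ht
            _ = ∫⁻ ω, Set.indicator {a | t ≤ f a} W ω ∂μ := by
                rw [← lintegral_indicator]
                rw [hset]; exact measurableSet_le measurable_const hZ
            _ = _ := by refine lintegral_congr fun ω => (hbb ω).symm
        · have hset : {a | t ≤ f a} = (∅ : Set Ω) := by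
            ext a
            simp only [mem_setOf_eq, mem_empty_iff_false, iff_false, not_le]
            exact lt_of_le_of_lt (min_le_right _ _) htK
          simp [hset]
      have hswap : ∫⁻ t in Ioi (0:ℝ), ∫⁻ ω, (fun (t : ℝ) (ω : Ω) => Set.indicator
              {p : ℝ × Ω | p.1 ≤ f p.2} (fun q => W q.2) (t, ω)) t ω ∂μ
          = ∫⁻ ω, (∫⁻ t in Ioi (0:ℝ), (fun (t : ℝ) (ω : Ω) => Set.indicator
              {p : ℝ × Ω | p.1 ≤ f p.2} (fun q => W q.2) (t, ω)) t ω) ∂μ :=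
        lintegral_lintegral_swap (hGm.aemeasurable)
      have inner : ∀ ω, ∫⁻ t in Ioi (0:ℝ), Set.indicator {p : ℝ × Ω | p.1 ≤ f p.2}
          (fun q => W q.2) (t, ω) = W ω * ENNReal.ofReal (f ω) := by
        intro ω
        have : ∀ t : ℝ, Set.indicator {p : ℝ × Ω | p.1 ≤ f p.2} (fun q => W q.2) (t, ω)
            = Set.indicator (Iic (f ω)) (fun _ => W ω) t := by
          intro t
          by_cases h : t ≤ f ω <;> simp [Set.indicator_apply, h]
        simp_rw [this]
        rw [lintegral_indicator measurableSet_Iic, setLIntegral_const,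
          Measure.restrict_apply measurableSet_Iic]
        have : Iic (f ω) ∩ Ioi 0 = Ioc 0 (f ω) := by
          ext x; simp [Set.mem_Ioc, Set.mem_Iic, Set.mem_Ioi, and_comm]
        rw [this, Real.volume_Ioc, sub_zero]
      calc ∫⁻ t in Ioi (0:ℝ), μ {a | t ≤ f a} * ENNReal.ofReal t
          ≤ ∫⁻ t in Ioi (0:ℝ), ∫⁻ ω, Set.indicator {p : ℝ × Ω | p.1 ≤ f p.2}
              (fun q => W q.2) (t, ω) ∂μ := step1
        _ = ∫⁻ ω, (∫⁻ t in Ioi (0:ℝ), Set.indicator {p : ℝ × Ω | p.1 ≤ f p.2}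
              (fun q => W q.2) (t, ω)) ∂μ := hswap
        _ = ∫⁻ ω, W ω * ENNReal.ofReal (f ω) ∂μ := lintegral_congr fun ω => inner ω
    -- Cauchy–Schwarz
    have hofm : Measurable fun ω => ENNReal.ofReal (f ω) :=
      ENNReal.measurable_ofReal.comp hfm
    have holder := ENNReal.lintegral_mul_le_Lp_mul_Lq μ
      Real.HolderConjugate.two_two
      hW.aemeasurable hofm.aemeasurable
    have hofr : ∀ ω, (ENNReal.ofReal (f ω)) ^ (2:ℝ) = ENNReal.ofReal (f ω ^ 2) := by
      intro ω
      rw [ENNReal.ofReal_rpow_of_nonneg (hfnn ω) (by norm_num : (0:ℝ) ≤ 2)]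
      congr 1
      rw [show (2:ℝ) = ((2:ℕ):ℝ) by norm_num, Real.rpow_natCast]
    have hCS : A ≤ 2 * (B ^ (1/2:ℝ) * A ^ (1/2:ℝ)) := by
      calc A = ENNReal.ofReal 2 * ∫⁻ t in Ioi (0:ℝ), μ {a | t ≤ f a} * ENNReal.ofReal t := lc
        _ ≤ ENNReal.ofReal 2 * ∫⁻ ω, W ω * ENNReal.ofReal (f ω) ∂μ := by
            exact mul_le_mul_right key2 _
        _ = 2 * ∫⁻ ω, (W * fun ω => ENNReal.ofReal (f ω)) ω ∂μ := by
            rw [ENNReal.ofReal_ofNat]; rfl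
        _ ≤ 2 * ((∫⁻ ω, W ω ^ (2:ℝ) ∂μ) ^ (1/2:ℝ) *
              (∫⁻ ω, (ENNReal.ofReal (f ω)) ^ (2:ℝ) ∂μ) ^ (1/2:ℝ)) := by
            exact mul_le_mul_right holder _
        _ = 2 * (B ^ (1/2:ℝ) * A ^ (1/2:ℝ)) := by
            congr 2
            rw [hA]
            congr 1
            exact lintegral_congr fun ω => hofr ω
    by_cases hA0 : A = 0
    · rw [hA0]; exact zero_le
    · have hAh0 : A ^ (1/2:ℝ) ≠ 0 := by
        simp [ENNReal.rpow_eq_zero_iff, hA0, hAtop]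
      have hAht : A ^ (1/2:ℝ) ≠ ⊤ := by
        simp [ENNReal.rpow_eq_top_iff, hA0, hAtop]
      have h12 : A ^ (1/2:ℝ) ≤ 2 * B ^ (1/2:ℝ) := by
        have hsplit : A = A ^ (1/2:ℝ) * A ^ (1/2:ℝ) := by
          rw [← ENNReal.rpow_add _ _ hA0 hAtop]; norm_num
        have : A ^ (1/2:ℝ) * A ^ (1/2:ℝ) ≤ (2 * B ^ (1/2:ℝ)) * A ^ (1/2:ℝ) := by
          rw [← hsplit, mul_assoc]; exact hCS
        exact (ENNReal.mul_le_mul_iff_left hAh0 hAht).1 this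
      have h4 : ((2:ℝ≥0∞) ^ (2:ℝ)) = 4 := by
        rw [show (2:ℝ) = ((2:ℕ):ℝ) by norm_num, ENNReal.rpow_natCast]; norm_num
      calc A = (A ^ (1/2:ℝ)) ^ (2:ℝ) := by
            rw [← ENNReal.rpow_mul]; norm_num
        _ ≤ (2 * B ^ (1/2:ℝ)) ^ (2:ℝ) := ENNReal.rpow_le_rpow h12 (by norm_num)
        _ = 4 * B := by
            rw [ENNReal.mul_rpow_of_nonneg _ _ (by norm_num : (0:ℝ) ≤ 2),
              ← ENNReal.rpow_mul, h4]
            norm_num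
  -- monotone convergence in K
  have mono : ∀ ω, Monotone fun n : ℕ => ENNReal.ofReal (min (Z ω) (n+1) ^ 2) := by
    intro ω n m hnm
    refine ENNReal.ofReal_le_ofReal ?_
    refine pow_le_pow_left₀ (le_min (hZnn ω) (by positivity)) ?_ 2
    exact min_le_min le_rfl (by exact_mod_cast Nat.add_le_add_right hnm 1)
  have hsup : ∀ ω, ENNReal.ofReal (Z ω ^ 2) = ⨆ n : ℕ, ENNReal.ofReal (min (Z ω) (n+1) ^ 2) := by
    intro ω
    refine le_antisymm ?_ ?_
    · obtain ⟨n, hn⟩ := exists_nat_ge (Z ω)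
      refine le_iSup_of_le n (le_of_eq ?_)
      congr 1
      rw [min_eq_left (le_trans hn (by linarith))]
    · refine iSup_le fun n => ENNReal.ofReal_le_ofReal ?_
      exact pow_le_pow_left₀ (le_min (hZnn ω) (by positivity)) (min_le_left _ _) 2
  calc ∫⁻ ω, ENNReal.ofReal (Z ω ^ 2) ∂μ
      = ∫⁻ ω, ⨆ n : ℕ, ENNReal.ofReal (min (Z ω) (n+1) ^ 2) ∂μ := by
        exact lintegral_congr fun ω => hsup ω
    _ = ⨆ n : ℕ, ∫⁻ ω, ENNReal.ofReal (min (Z ω) (n+1) ^ 2) ∂μ := by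
        refine lintegral_iSup (fun n => ?_) (fun n m hnm => ?_)
        · exact ENNReal.measurable_ofReal.comp ((hZ.min measurable_const).pow_const 2)
        · intro ω; exact mono ω hnm
    _ ≤ 4 * B := iSup_le fun n => stepK (n+1) (by positivity)

lemma lem_weak {Ω : Type*} [MeasurableSpace Ω] (P : Measure Ω) [IsProbabilityMeasure P]
    (n : ℕ) (D : ℕ → Ω → ℝ) (hD : ∀ i, Measurable (D i))
    (hiid : iIndepFun
      (fun (i : Fin n) => fun ω => D i.val ω) P)
    (hV : ∀ k, k ≤ n →
      1 ≤ ∫⁻ ω, ENNReal.ofReal (Real.exp ((∑ i ∈ Finset.Ico k n, D i ω)/2)) ∂P)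
    (r : ℝ) :
    ENNReal.ofReal (Real.exp (r/2)) *
        P {ω | r ≤ (Finset.range (n+1)).sup' Finset.nonempty_range_add_one
            (fun k => ∑ i ∈ Finset.range k, D i ω)} ≤
      ∫⁻ ω in {ω | r ≤ (Finset.range (n+1)).sup' Finset.nonempty_range_add_one
            (fun k => ∑ i ∈ Finset.range k, D i ω)},
        ENNReal.ofReal (Real.exp ((∑ i ∈ Finset.range n, D i ω)/2)) ∂P := by
  set S : ℕ → Ω → ℝ := fun j ω => ∑ i ∈ Finset.range j, D i ω with hS
  have hSm : ∀ j, Measurable (S j) := fun j => Finset.measurable_sum _ fun i _ => hD i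
  set A : ℕ → Set Ω := fun k => {ω | k ≤ n ∧ r ≤ S k ω ∧ ∀ j, j < k → S j ω < r} with hA
  have hAm : ∀ k, MeasurableSet (A k) := by
    intro k
    have : A k = {ω | k ≤ n} ∩ ({ω | r ≤ S k ω} ∩ ⋂ (j : ℕ) (_ : j < k), {ω | S j ω < r}) := by
      ext ω
      simp only [hA, mem_setOf_eq, mem_inter_iff, mem_iInter]
    rw [this]
    refine (MeasurableSet.const _).inter (MeasurableSet.inter ?_ ?_)
    · exact measurableSet_le measurable_const (hSm k)
    · exact MeasurableSet.iInter fun j => MeasurableSet.iInter fun _ =>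
        measurableSet_lt (hSm j) measurable_const
  have hdisj : Pairwise (Function.onFun Disjoint A) := by
    intro k k' hkk'
    show Disjoint (A k) (A k')
    rcases hkk'.lt_or_gt with h | h
    · rw [Set.disjoint_left]
      rintro ω ⟨_, hr, _⟩ ⟨_, _, hlt⟩
      exact absurd hr (not_le.2 (hlt k h))
    · rw [Set.disjoint_left]
      rintro ω ⟨_, _, hlt⟩ ⟨_, hr, _⟩
      exact absurd hr (not_le.2 (hlt k' h))
  have hunion : {ω | r ≤ (Finset.range (n+1)).sup' Finset.nonempty_range_add_one
      (fun k => S k ω)} = ⋃ k, A k := by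
    ext ω
    simp only [mem_setOf_eq, mem_iUnion]
    constructor
    · intro h
      rw [Finset.le_sup'_iff] at h
      obtain ⟨k, hk, hrk⟩ := h
      rw [Finset.mem_range] at hk
      have hex : ∃ m, r ≤ S m ω := ⟨k, hrk⟩
      refine ⟨Nat.find hex, ?_, Nat.find_spec hex, fun j hj => ?_⟩
      · exact le_trans (Nat.find_min' hex hrk) (Nat.lt_succ_iff.1 hk)
      · exact lt_of_not_ge (Nat.find_min hex hj)
    · rintro ⟨k, hk, hrk, _⟩
      exact le_trans hrk (Finset.le_sup' (fun k => S k ω)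
        (Finset.mem_range.2 (Nat.lt_succ_iff.2 hk)))
  rw [hunion, measure_iUnion hdisj hAm, lintegral_iUnion hAm hdisj, ENNReal.tsum_mul_left.symm]
  refine ENNReal.tsum_le_tsum fun k => ?_
  by_cases hk : k ≤ n
  swap
  · have : A k = ∅ := by
      ext ω; simp only [hA, mem_setOf_eq, mem_empty_iff_false, iff_false]
      rintro ⟨h, _⟩; exact hk h
    simp [this]
  -- main case k ≤ n
  -- the two blocks of increments
  set Sb : Finset (Fin n) := Finset.univ.filter (fun i : Fin n => (i:ℕ) < k) with hSb
  set Tb : Finset (Fin n) := Finset.univ.filter (fun i : Fin n => k ≤ (i:ℕ)) with hTb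
  have hST : Disjoint Sb Tb := by
    rw [Finset.disjoint_left]
    intro i hi hi'
    rw [hSb, Finset.mem_filter] at hi
    rw [hTb, Finset.mem_filter] at hi'
    omega
  have base := hiid.indepFun_finset Sb Tb hST (fun i => hD i.val)
  -- the sum functionals
  set σf : ℕ → ((i : Sb) → ℝ) → ℝ :=
    fun j x => ∑ i : Sb, if ((i : Fin n) : ℕ) < j then x i else 0 with hσf
  have hσm : ∀ j, Measurable (σf j) := by
    intro j
    refine Finset.measurable_sum _ fun i _ => ?_
    by_cases h : ((i : Fin n) : ℕ) < j
    · simpa [h] using measurable_pi_apply i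
    · simpa [h] using measurable_const
  have hσeq : ∀ j, j ≤ k → ∀ ω, σf j (fun i : Sb => D ((i : Fin n) : ℕ) ω) = S j ω := by
    intro j hj ω
    have e1 : ∑ i : Sb, (if ((i : Fin n) : ℕ) < j then D ((i : Fin n) : ℕ) ω else 0)
        = ∑ i ∈ Sb, (if (i : ℕ) < j then D (i : ℕ) ω else 0) := by
      exact Finset.sum_coe_sort Sb (fun i => if (i : ℕ) < j then D (i:ℕ) ω else 0)
    show (∑ i : Sb, if ((i : Fin n) : ℕ) < j then D ((i : Fin n) : ℕ) ω else 0) = S j ω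
    rw [e1, hSb, Finset.sum_filter]
    have e2 : ∀ i : Fin n, (if ((i:ℕ) < k) then (if (i : ℕ) < j then D (i:ℕ) ω else 0) else 0)
        = if (i : ℕ) < j then D (i:ℕ) ω else 0 := by
      intro i
      by_cases h1 : (i:ℕ) < j
      · have h2 : (i:ℕ) < k := lt_of_lt_of_le h1 hj
        simp [h1, h2]
      · simp [h1]
    rw [Finset.sum_congr rfl fun i _ => e2 i]
    rw [Fin.sum_univ_eq_sum_range (fun i => if i < j then D i ω else 0) n]
    rw [← Finset.sum_filter]
    have e3 : (Finset.range n).filter (fun i => i < j) = Finset.range j := by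
      ext i
      simp only [Finset.mem_filter, Finset.mem_range]
      omega
    rw [e3]
  set Ψf : ((i : Tb) → ℝ) → ℝ≥0∞ :=
    fun x => ENNReal.ofReal (Real.exp ((∑ i : Tb, x i)/2)) with hΨf
  have hΨm : Measurable Ψf := by
    refine ENNReal.measurable_ofReal.comp (Real.measurable_exp.comp ?_)
    exact (Finset.measurable_sum _ fun i _ => measurable_pi_apply i).div_const 2
  have hΨeq : ∀ ω, Ψf (fun i : Tb => D ((i : Fin n) : ℕ) ω)
      = ENNReal.ofReal (Real.exp ((∑ i ∈ Finset.Ico k n, D i ω)/2)) := by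
    intro ω
    have e1 : ∑ i : Tb, D ((i : Fin n) : ℕ) ω = ∑ i ∈ Tb, D (i : ℕ) ω :=
      Finset.sum_coe_sort Tb (fun i => D (i:ℕ) ω)
    have e2 : (∑ i : Tb, D ((i : Fin n) : ℕ) ω) = ∑ i ∈ Finset.Ico k n, D i ω := by
      rw [e1, hTb, Finset.sum_filter,
        Fin.sum_univ_eq_sum_range (fun i => if k ≤ i then D i ω else 0) n, ← Finset.sum_filter]
      congr 1
      ext i
      simp only [Finset.mem_filter, Finset.mem_range, Finset.mem_Ico]
      omega
    show ENNReal.ofReal (Real.exp ((∑ i : Tb, D ((i : Fin n) : ℕ) ω)/2)) = _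
    rw [e2]
  -- U and V
  set U : Ω → ℝ≥0∞ := (A k).indicator (fun ω => ENNReal.ofReal (Real.exp (S k ω / 2))) with hU
  set V : Ω → ℝ≥0∞ := fun ω => ENNReal.ofReal (Real.exp ((∑ i ∈ Finset.Ico k n, D i ω)/2))
    with hVdef
  have hUm : Measurable U :=
    (ENNReal.measurable_ofReal.comp (Real.measurable_exp.comp ((hSm k).div_const 2))).indicator
      (hAm k)
  have hVm : Measurable V :=
    ENNReal.measurable_ofReal.comp (Real.measurable_exp.comp
      ((Finset.measurable_sum _ fun i _ => hD i).div_const 2))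
  -- independence of U and V
  set Φf : ((i : Sb) → ℝ) → ℝ≥0∞ :=
    Set.indicator {x | r ≤ σf k x ∧ ∀ j, j < k → σf j x < r}
      (fun x => ENNReal.ofReal (Real.exp (σf k x / 2))) with hΦf
  have hΦm : Measurable Φf := by
    refine Measurable.indicator ?_ ?_
    · exact ENNReal.measurable_ofReal.comp (Real.measurable_exp.comp ((hσm k).div_const 2))
    · have : {x | r ≤ σf k x ∧ ∀ j, j < k → σf j x < r}
          = {x | r ≤ σf k x} ∩ ⋂ (j : ℕ) (_ : j < k), {x | σf j x < r} := by
        ext x; simp only [mem_setOf_eq, mem_inter_iff, mem_iInter]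
      rw [this]
      exact (measurableSet_le measurable_const (hσm k)).inter
        (MeasurableSet.iInter fun j => MeasurableSet.iInter fun _ =>
          measurableSet_lt (hσm j) measurable_const)
  have hUeq : U = Φf ∘ (fun ω (i : Sb) => D ((i : Fin n) : ℕ) ω) := by
    funext ω
    have hmem : ω ∈ A k ↔ (fun i : Sb => D ((i : Fin n) : ℕ) ω) ∈
        {x | r ≤ σf k x ∧ ∀ j, j < k → σf j x < r} := by
      simp only [hA, mem_setOf_eq]
      constructor
      · rintro ⟨_, h1, h2⟩
        exact ⟨by rw [hσeq k le_rfl]; exact h1, fun j hj => by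
          rw [hσeq j hj.le]; exact h2 j hj⟩
      · rintro ⟨h1, h2⟩
        rw [hσeq k le_rfl] at h1
        exact ⟨hk, h1, fun j hj => by have := h2 j hj; rwa [hσeq j hj.le] at this⟩
    by_cases h : ω ∈ A k
    · rw [hU, Set.indicator_of_mem h]
      rw [Function.comp_apply, hΦf, Set.indicator_of_mem (hmem.1 h)]
      rw [hσeq k le_rfl]
    · rw [hU, Set.indicator_of_notMem h]
      rw [Function.comp_apply, hΦf, Set.indicator_of_notMem (fun hc => h (hmem.2 hc))]
  have hVeq : V = Ψf ∘ (fun ω (i : Tb) => D ((i : Fin n) : ℕ) ω) := by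
    funext ω
    rw [hVdef, Function.comp_apply, hΨeq ω]
  have hindepUV : IndepFun U V P := by
    rw [hUeq, hVeq]
    exact base.comp hΦm hΨm
  -- the chain
  calc ENNReal.ofReal (Real.exp (r/2)) * P (A k)
      ≤ ∫⁻ ω in A k, ENNReal.ofReal (Real.exp (S k ω / 2)) ∂P := by
        rw [← setLIntegral_const (A k) (ENNReal.ofReal (Real.exp (r/2)))]
        refine setLIntegral_mono
          (ENNReal.measurable_ofReal.comp (Real.measurable_exp.comp ((hSm k).div_const 2)))
          fun ω hω => ?_
        exact ENNReal.ofReal_le_ofReal (Real.exp_le_exp.2 (by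
          have : r ≤ S k ω := hω.2.1
          linarith))
    _ = ∫⁻ ω, U ω ∂P := by rw [hU, lintegral_indicator (hAm k)]
    _ ≤ (∫⁻ ω, U ω ∂P) * ∫⁻ ω, V ω ∂P := by
        nth_rewrite 1 [← mul_one (∫⁻ ω, U ω ∂P)]
        exact mul_le_mul_right (hV k hk) _
    _ = ∫⁻ ω, U ω * V ω ∂P := by
        rw [lintegral_mul_eq_lintegral_mul_lintegral_of_indepFun'' hUm.aemeasurable
          hVm.aemeasurable hindepUV]
    _ = ∫⁻ ω in A k, ENNReal.ofReal (Real.exp (S n ω / 2)) ∂P := by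
        rw [← lintegral_indicator (hAm k)]
        refine lintegral_congr fun ω => ?_
        by_cases h : ω ∈ A k
        · rw [hU, Set.indicator_of_mem h, Set.indicator_of_mem h, hVdef]
          rw [← ENNReal.ofReal_mul (Real.exp_nonneg _), ← Real.exp_add]
          congr 2
          rw [Finset.sum_Ico_eq_sub _ hk]
          ring
        · rw [hU, Set.indicator_of_notMem h, Set.indicator_of_notMem h, zero_mul]

lemma lem_discrete {Ω : Type*} [MeasurableSpace Ω] (P : Measure Ω) [IsProbabilityMeasure P]
    (Y : ℝ → Ω → ℝ)
    (hmeas : ∀ t : ℝ, Measurable (Y t))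
    (h0 : ∀ᵐ ω ∂P, Y 0 ω = 0)
    (hstat : ∀ s t : ℝ, 0 ≤ s → s ≤ t →
      Measure.map (fun ω => Y t ω - Y s ω) P = Measure.map (Y (t - s)) P)
    (hindep : ∀ (n : ℕ) (τ : Fin (n + 1) → ℝ), Monotone τ → 0 ≤ τ 0 →
      iIndepFun
        (fun i : Fin n => fun ω => Y (τ i.succ) ω - Y (τ i.castSucc) ω) P)
    (hint : ∀ t : ℝ, 0 < t → Integrable (Y t) P)
    (hmean : ∀ t : ℝ, 0 < t → ∫ ω, Y t ω ∂P = 0)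
    (u : ℕ → ℝ) (hu : Monotone u) (hu0 : u 0 = 0) (n : ℕ) :
    ∫⁻ ω, ENNReal.ofReal (Real.exp ((Finset.range (n+1)).sup' Finset.nonempty_range_add_one
        (fun k => Y (u k) ω))) ∂P ≤
      4 * ∫⁻ ω, ENNReal.ofReal (Real.exp (Y (u n) ω)) ∂P := by
  set D : ℕ → Ω → ℝ := fun i ω => Y (u (i+1)) ω - Y (u i) ω with hD
  have hDm : ∀ i, Measurable (D i) := fun i => (hmeas _).sub (hmeas _)
  set S : ℕ → Ω → ℝ := fun j ω => ∑ i ∈ Finset.range j, D i ω with hS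
  have hSm : ∀ j, Measurable (S j) := fun j => Finset.measurable_sum _ fun i _ => hDm i
  have htel : ∀ j ω, S j ω = Y (u j) ω - Y 0 ω := by
    intro j ω
    show (∑ i ∈ Finset.range j, (Y (u (i+1)) ω - Y (u i) ω)) = _
    rw [Finset.sum_range_sub (fun i => Y (u i) ω) j, hu0]
  have hu_nn : ∀ k, 0 ≤ u k := fun k => hu0 ▸ hu (Nat.zero_le k)
  have hIco : ∀ k, k ≤ n → ∀ ω, (∑ i ∈ Finset.Ico k n, D i ω) = Y (u n) ω - Y (u k) ω := by
    intro k hk ω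
    rw [Finset.sum_Ico_eq_sub _ hk]
    have e1 := htel n ω
    have e2 := htel k ω
    simp only [hS] at e1 e2
    rw [e1, e2]; ring
  -- a.e. transfer
  have hae : ∀ᵐ ω ∂P, ∀ j, S j ω = Y (u j) ω := by
    filter_upwards [h0] with ω hω j
    rw [htel j ω, hω, sub_zero]
  -- hiid
  have hiid : iIndepFun
      (fun (i : Fin n) => fun ω => D i.val ω) P := by
    have hmono : Monotone (fun j : Fin (n+1) => u (j : ℕ)) := by
      intro a b hab
      exact hu (by exact_mod_cast hab)
    have h := hindep n (fun j : Fin (n+1) => u (j : ℕ)) hmono (by simp [hu0])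
    have heq : (fun (i : Fin n) => fun ω => D i.val ω)
        = fun i : Fin n => fun ω => Y (u (i.succ : ℕ)) ω - Y (u (i.castSucc : ℕ)) ω := by
      funext i ω
      simp only [hD, Fin.val_succ, Fin.coe_castSucc]
    rw [heq]
    exact h
  -- hV
  have hV : ∀ k, k ≤ n →
      1 ≤ ∫⁻ ω, ENNReal.ofReal (Real.exp ((∑ i ∈ Finset.Ico k n, D i ω)/2)) ∂P := by
    intro k hk
    have heq : ∀ ω, ENNReal.ofReal (Real.exp ((∑ i ∈ Finset.Ico k n, D i ω)/2))
        = ENNReal.ofReal (Real.exp ((Y (u n) ω - Y (u k) ω)/2)) := by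
      intro ω; rw [hIco k hk ω]
    rw [lintegral_congr heq]
    rcases eq_or_lt_of_le (hu hk) with he | hlt
    · have : ∀ ω, ENNReal.ofReal (Real.exp ((Y (u n) ω - Y (u k) ω)/2)) = 1 := by
        intro ω; rw [← he]; simp
      rw [lintegral_congr this]; simp
    · have hmm : Measurable fun x : ℝ => ENNReal.ofReal (Real.exp (x/2)) :=
        ENNReal.measurable_ofReal.comp (Real.measurable_exp.comp (measurable_id.div_const 2))
      have e1 : ∫⁻ ω, ENNReal.ofReal (Real.exp ((Y (u n) ω - Y (u k) ω)/2)) ∂P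
          = ∫⁻ x, ENNReal.ofReal (Real.exp (x/2)) ∂(Measure.map (fun ω => Y (u n) ω - Y (u k) ω) P) := by
        rw [lintegral_map (g := fun ω => Y (u n) ω - Y (u k) ω) hmm ((hmeas _).sub (hmeas _))]
      rw [e1, hstat (u k) (u n) (hu_nn k) (hu hk),
        lintegral_map hmm (hmeas _)]
      have : ∀ ω, ENNReal.ofReal (Real.exp (Y (u n - u k) ω / 2))
          = ENNReal.ofReal (Real.exp ((fun ω => Y (u n - u k) ω / 2) ω)) := fun ω => rfl
      rw [lintegral_congr this]
      exact lem_ge_one P _ ((hmeas _).div_const 2)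
        ((hint _ (by linarith)).div_const 2)
        (by rw [integral_div, hmean _ (by linarith), zero_div])
  -- reduce to S
  have hLHS : ∫⁻ ω, ENNReal.ofReal (Real.exp ((Finset.range (n+1)).sup'
        Finset.nonempty_range_add_one (fun k => Y (u k) ω))) ∂P
      = ∫⁻ ω, ENNReal.ofReal (Real.exp ((Finset.range (n+1)).sup'
        Finset.nonempty_range_add_one (fun k => S k ω))) ∂P := by
    refine lintegral_congr_ae ?_
    filter_upwards [hae] with ω hω
    congr 1
    rw [Real.exp_eq_exp]
    exact Finset.sup'_congr _ rfl (fun k _ => (hω k).symm)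
  have hRHS : ∫⁻ ω, ENNReal.ofReal (Real.exp (Y (u n) ω)) ∂P
      = ∫⁻ ω, ENNReal.ofReal (Real.exp (S n ω)) ∂P := by
    refine lintegral_congr_ae ?_
    filter_upwards [hae] with ω hω
    rw [hω n]
  rw [hLHS, hRHS]
  -- apply Doob L²
  set Mx : Ω → ℝ := fun ω => (Finset.range (n+1)).sup' Finset.nonempty_range_add_one
    (fun k => S k ω) with hMx
  have hMxm : Measurable Mx := Finset.measurable_range_sup'' fun k _ => hSm k
  set Z : Ω → ℝ := fun ω => Real.exp (Mx ω / 2) with hZ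
  set W : Ω → ℝ≥0∞ := fun ω => ENNReal.ofReal (Real.exp (S n ω / 2)) with hW
  have hZm : Measurable Z := Real.measurable_exp.comp (hMxm.div_const 2)
  have hWm : Measurable W :=
    ENNReal.measurable_ofReal.comp (Real.measurable_exp.comp ((hSm n).div_const 2))
  have hkey : ∀ l : ℝ, 0 < l →
      ENNReal.ofReal l * P {ω | l ≤ Z ω} ≤ ∫⁻ ω in {ω | l ≤ Z ω}, W ω ∂P := by
    intro l hl
    set r : ℝ := 2 * Real.log l with hr
    have hset : {ω | l ≤ Z ω} = {ω | r ≤ Mx ω} := by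
      ext ω
      simp only [hZ, mem_setOf_eq, hr]
      rw [← Real.log_le_iff_le_exp hl]
      constructor <;> intro h <;> linarith
    have hlr : ENNReal.ofReal l = ENNReal.ofReal (Real.exp (r/2)) := by
      rw [hr]
      congr 1
      rw [show (2:ℝ) * Real.log l / 2 = Real.log l by ring, Real.exp_log hl]
    rw [hset, hlr]
    exact lem_weak P n D hDm hiid hV r
  have hdoob := lem_doobL2 P Z W hZm (fun ω => (Real.exp_pos _).le) hWm hkey
  have hZ2 : ∀ ω, ENNReal.ofReal (Z ω ^ 2) = ENNReal.ofReal (Real.exp (Mx ω)) := by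
    intro ω
    congr 1
    rw [hZ, sq, ← Real.exp_add, add_halves]
  have hW2 : ∀ ω, (W ω) ^ (2:ℝ) = ENNReal.ofReal (Real.exp (S n ω)) := by
    intro ω
    rw [hW, ENNReal.ofReal_rpow_of_nonneg (Real.exp_nonneg _) (by norm_num : (0:ℝ) ≤ 2)]
    congr 1
    rw [show (2:ℝ) = ((2:ℕ):ℝ) by norm_num, Real.rpow_natCast, sq, ← Real.exp_add]
    congr 1
    push_cast
    ring
  calc ∫⁻ ω, ENNReal.ofReal (Real.exp (Mx ω)) ∂P
      = ∫⁻ ω, ENNReal.ofReal (Z ω ^ 2) ∂P := lintegral_congr fun ω => (hZ2 ω).symm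
    _ ≤ 4 * ∫⁻ ω, (W ω) ^ (2:ℝ) ∂P := hdoob
    _ = 4 * ∫⁻ ω, ENNReal.ofReal (Real.exp (S n ω)) ∂P := by
        congr 1
        exact lintegral_congr fun ω => hW2 ω

lemma lem_twosided {Ω : Type*} [MeasurableSpace Ω] (P : Measure Ω) [IsProbabilityMeasure P]
    (Y : ℝ → Ω → ℝ)
    (hmeas : ∀ t : ℝ, Measurable (Y t))
    (h0 : ∀ᵐ ω ∂P, Y 0 ω = 0)
    (hstat : ∀ s t : ℝ, 0 ≤ s → s ≤ t →
      Measure.map (fun ω => Y t ω - Y s ω) P = Measure.map (Y (t - s)) P)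
    (hindep : ∀ (n : ℕ) (τ : Fin (n + 1) → ℝ), Monotone τ → 0 ≤ τ 0 →
      iIndepFun
        (fun i : Fin n => fun ω => Y (τ i.succ) ω - Y (τ i.castSucc) ω) P)
    (hint : ∀ t : ℝ, 0 < t → Integrable (Y t) P)
    (hmean : ∀ t : ℝ, 0 < t → ∫ ω, Y t ω ∂P = 0)
    (u : ℕ → ℝ) (hu : Monotone u) (hu0 : u 0 = 0) (n : ℕ) :
    ∫⁻ ω, ENNReal.ofReal (Real.exp ((Finset.range (n+1)).sup' Finset.nonempty_range_add_one
        (fun k => |Y (u k) ω|))) ∂P ≤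
      8 * ∫⁻ ω, ENNReal.ofReal (Real.exp |Y (u n) ω|) ∂P := by
  set Yn : ℝ → Ω → ℝ := fun s ω => -(Y s ω) with hYn
  have h1 := lem_discrete P Y hmeas h0 hstat hindep hint hmean u hu hu0 n
  have h2 : ∫⁻ ω, ENNReal.ofReal (Real.exp ((Finset.range (n+1)).sup'
      Finset.nonempty_range_add_one (fun k => Yn (u k) ω))) ∂P ≤
      4 * ∫⁻ ω, ENNReal.ofReal (Real.exp (Yn (u n) ω)) ∂P := by
    refine lem_discrete P Yn (fun t => (hmeas t).neg) ?_ ?_ ?_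
      (fun t ht => (hint t ht).neg) (fun t ht => by
        simp only [hYn]
        rw [integral_neg, hmean t ht, neg_zero]) u hu hu0 n
    · filter_upwards [h0] with ω hω
      simp [hYn, hω]
    · intro s t hs hst
      have e1 : (fun ω => Yn t ω - Yn s ω) = (fun x : ℝ => -x) ∘ (fun ω => Y t ω - Y s ω) := by
        funext ω; simp [hYn]; ring
      have e2 : Yn (t - s) = (fun x : ℝ => -x) ∘ (Y (t - s)) := by
        funext ω; simp [hYn]
      rw [e1, e2, ← Measure.map_map (g := fun x : ℝ => -x) (f := fun ω => Y t ω - Y s ω) measurable_neg ((hmeas t).sub (hmeas s)),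
        ← Measure.map_map (g := fun x : ℝ => -x) measurable_neg (hmeas (t - s)), hstat s t hs hst]
    · intro m τ hτ hτ0
      have h := (hindep m τ hτ hτ0).comp (g := fun _ : Fin m => fun x : ℝ => -x)
        (fun i => measurable_neg)
      have e : (fun i : Fin m => fun ω => Yn (τ i.succ) ω - Yn (τ i.castSucc) ω)
          = fun i : Fin m => (fun x : ℝ => -x) ∘ (fun ω => Y (τ i.succ) ω - Y (τ i.castSucc) ω) := by
        funext i ω; simp [hYn]; ring
      rw [e]
      exact h
  -- pointwise bound
  have hpt : ∀ ω, ENNReal.ofReal (Real.exp ((Finset.range (n+1)).sup'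
      Finset.nonempty_range_add_one (fun k => |Y (u k) ω|)))
      ≤ ENNReal.ofReal (Real.exp ((Finset.range (n+1)).sup'
          Finset.nonempty_range_add_one (fun k => Y (u k) ω)))
        + ENNReal.ofReal (Real.exp ((Finset.range (n+1)).sup'
          Finset.nonempty_range_add_one (fun k => Yn (u k) ω))) := by
    intro ω
    obtain ⟨k0, hk0, hk0eq⟩ := Finset.exists_mem_eq_sup' Finset.nonempty_range_add_one
      (fun k => |Y (u k) ω|)
    rcases abs_cases (Y (u k0) ω) with ⟨habs, _⟩ | ⟨habs, _⟩
    · refine le_trans (le_trans ?_ (le_add_of_nonneg_right zero_le)) le_rfl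
      refine ENNReal.ofReal_le_ofReal (Real.exp_le_exp.2 ?_)
      rw [hk0eq, habs]
      exact Finset.le_sup' (fun k => Y (u k) ω) hk0
    · refine le_trans (le_trans ?_ (le_add_of_nonneg_left zero_le)) le_rfl
      refine ENNReal.ofReal_le_ofReal (Real.exp_le_exp.2 ?_)
      rw [hk0eq, habs]
      exact le_trans (by simp [hYn]) (Finset.le_sup' (fun k => Yn (u k) ω) hk0)
  have hmeasb : Measurable fun ω => ENNReal.ofReal (Real.exp ((Finset.range (n+1)).sup'
      Finset.nonempty_range_add_one (fun k => Y (u k) ω))) := by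
    refine ENNReal.measurable_ofReal.comp (Real.measurable_exp.comp ?_)
    exact Finset.measurable_range_sup'' fun k _ => hmeas (u k)
  calc ∫⁻ ω, ENNReal.ofReal (Real.exp ((Finset.range (n+1)).sup' Finset.nonempty_range_add_one
        (fun k => |Y (u k) ω|))) ∂P
      ≤ ∫⁻ ω, (ENNReal.ofReal (Real.exp ((Finset.range (n+1)).sup'
          Finset.nonempty_range_add_one (fun k => Y (u k) ω)))
        + ENNReal.ofReal (Real.exp ((Finset.range (n+1)).sup'
          Finset.nonempty_range_add_one (fun k => Yn (u k) ω)))) ∂P := lintegral_mono hpt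
    _ = ∫⁻ ω, ENNReal.ofReal (Real.exp ((Finset.range (n+1)).sup'
          Finset.nonempty_range_add_one (fun k => Y (u k) ω))) ∂P
        + ∫⁻ ω, ENNReal.ofReal (Real.exp ((Finset.range (n+1)).sup'
          Finset.nonempty_range_add_one (fun k => Yn (u k) ω))) ∂P :=
        lintegral_add_left hmeasb _
    _ ≤ 4 * ∫⁻ ω, ENNReal.ofReal (Real.exp (Y (u n) ω)) ∂P
        + 4 * ∫⁻ ω, ENNReal.ofReal (Real.exp (Yn (u n) ω)) ∂P := add_le_add h1 h2
    _ ≤ 4 * ∫⁻ ω, ENNReal.ofReal (Real.exp |Y (u n) ω|) ∂P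
        + 4 * ∫⁻ ω, ENNReal.ofReal (Real.exp |Y (u n) ω|) ∂P := by
        refine add_le_add (mul_le_mul_right (lintegral_mono fun ω => ?_) _)
          (mul_le_mul_right (lintegral_mono fun ω => ?_) _)
        · exact ENNReal.ofReal_le_ofReal (Real.exp_le_exp.2 (le_abs_self _))
        · exact ENNReal.ofReal_le_ofReal (Real.exp_le_exp.2 (by simp [hYn, neg_le_abs]))
    _ = 8 * ∫⁻ ω, ENNReal.ofReal (Real.exp |Y (u n) ω|) ∂P := by ring

lemma lem_grid (t : ℝ) (F : Finset ℝ) (hne : F.Nonempty)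
    (h0F : (0:ℝ) ∈ F) (htF : t ∈ F) (hsub : ∀ x ∈ F, x ∈ Set.Icc 0 t) :
    ∃ (N : ℕ) (u : ℕ → ℝ), Monotone u ∧ u 0 = 0 ∧ u N = t ∧
      ∀ g : ℝ → ℝ, (Finset.range (N+1)).sup' Finset.nonempty_range_add_one (fun k => g (u k))
        = F.sup' hne g := by
  set l : List ℝ := F.sort (· ≤ ·) with hl
  have hsort : l.Pairwise (· ≤ ·) := F.pairwise_sort (· ≤ ·)
  have hmemF : ∀ x, x ∈ l ↔ x ∈ F := fun x => Finset.mem_sort (· ≤ ·)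
  have hpos : 0 < l.length := by
    rw [hl, Finset.length_sort]
    exact Finset.card_pos.2 hne
  set u : ℕ → ℝ := fun k => if h : k < l.length then l.get ⟨k, h⟩ else t with hu
  have hgetF : ∀ (k : ℕ) (h : k < l.length), l.get ⟨k, h⟩ ∈ F :=
    fun k h => (hmemF _).1 (l.get_mem ⟨k, h⟩)
  have hget_le : ∀ (k : ℕ) (h : k < l.length), l.get ⟨k, h⟩ ≤ t :=
    fun k h => (hsub _ (hgetF k h)).2
  have hget_nn : ∀ (k : ℕ) (h : k < l.length), 0 ≤ l.get ⟨k, h⟩ :=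
    fun k h => (hsub _ (hgetF k h)).1
  have hmono : Monotone u := by
    intro a b hab
    by_cases hb : b < l.length
    · have ha : a < l.length := lt_of_le_of_lt hab hb
      rw [hu]
      simp only [ha, hb, dif_pos]
      exact hsort.rel_get_of_le (by exact Fin.mk_le_mk.2 hab)
    · by_cases ha : a < l.length
      · rw [hu]; simp only [ha, hb, dif_pos, dif_neg, not_false_iff]
        exact hget_le a ha
      · rw [hu]; simp only [ha, hb, dif_neg, not_false_iff, le_refl]
  have hu0 : u 0 = 0 := by
    obtain ⟨i, hi⟩ := List.mem_iff_get.1 ((hmemF (0:ℝ)).2 h0F)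
    rw [hu]
    simp only [hpos, dif_pos]
    refine le_antisymm ?_ (hget_nn 0 hpos)
    calc l.get ⟨0, hpos⟩ ≤ l.get i := hsort.rel_get_of_le (by exact Fin.mk_le_mk.2 (Nat.zero_le _))
      _ = 0 := hi
  set N : ℕ := l.length - 1 with hN
  have hNlt : N < l.length := by omega
  have hN1 : N + 1 = l.length := by omega
  have huN : u N = t := by
    obtain ⟨j, hj⟩ := List.mem_iff_get.1 ((hmemF t).2 htF)
    rw [hu]
    simp only [hNlt, dif_pos]
    refine le_antisymm (hget_le N hNlt) ?_
    calc t = l.get j := hj.symm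
      _ ≤ l.get ⟨N, hNlt⟩ := hsort.rel_get_of_le (by
          refine Fin.mk_le_mk.2 ?_
          have := j.isLt
          omega)
  refine ⟨N, u, hmono, hu0, huN, fun g => ?_⟩
  refine le_antisymm ?_ ?_
  · refine Finset.sup'_le _ _ fun k hk => ?_
    rw [Finset.mem_range] at hk
    have hkl : k < l.length := by omega
    have : u k = l.get ⟨k, hkl⟩ := by rw [hu]; simp only [hkl, dif_pos]
    rw [this]
    exact Finset.le_sup' g (hgetF k hkl)
  · refine Finset.sup'_le _ _ fun x hx => ?_
    obtain ⟨i, hi⟩ := List.mem_iff_get.1 ((hmemF x).2 hx)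
    have hil : (i : ℕ) < l.length := i.isLt
    have : g x = (fun k => g (u k)) (i : ℕ) := by
      simp only
      congr 1
      rw [hu]
      simp only [hil, dif_pos, ← hi]
    rw [this]
    exact Finset.le_sup' (fun k => g (u k)) (Finset.mem_range.2 (by omega))

theorem stmt_1
    {Ω : Type*} [MeasurableSpace Ω] (P : Measure Ω) [IsProbabilityMeasure P]
    (Y : ℝ → Ω → ℝ)
    (hmeas : ∀ t : ℝ, Measurable (Y t))
    (hrc : ∀ ω : Ω, ∀ t : ℝ, 0 ≤ t → ContinuousWithinAt (fun s => Y s ω) (Set.Ici t) t)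
    (hll : ∀ ω : Ω, ∀ t : ℝ, 0 < t →
      ∃ l : ℝ, Tendsto (fun s => Y s ω) (nhdsWithin t (Set.Iio t)) (nhds l))
    (h0 : ∀ᵐ ω ∂P, Y 0 ω = 0)
    (hstat : ∀ s t : ℝ, 0 ≤ s → s ≤ t →
      Measure.map (fun ω => Y t ω - Y s ω) P = Measure.map (Y (t - s)) P)
    (hindep : ∀ (n : ℕ) (τ : Fin (n + 1) → ℝ), Monotone τ → 0 ≤ τ 0 →
      iIndepFun
        (fun i : Fin n => fun ω => Y (τ i.succ) ω - Y (τ i.castSucc) ω) P)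
    (hint : ∀ t : ℝ, 0 < t → Integrable (Y t) P)
    (hmean : ∀ t : ℝ, 0 < t → ∫ ω, Y t ω ∂P = 0) :
    ∀ t : ℝ, 0 ≤ t →
      (∫⁻ ω, ENNReal.ofReal (Real.exp (⨆ s : Set.Icc (0 : ℝ) t, |Y s.1 ω|)) ∂P) ≤
        8 * ∫⁻ ω, ENNReal.ofReal (Real.exp |Y t ω|) ∂P := by
  intro t ht
  -- countable dense grid
  set e : ℕ → ℚ := fun m => (Denumerable.eqv ℚ).symm m with he
  set d : ℕ → ℝ := fun m => if ((e m : ℝ)) ∈ Set.Icc (0:ℝ) t then (e m : ℝ) else t with hd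
  have hd_mem : ∀ m, d m ∈ Set.Icc (0:ℝ) t := by
    intro m
    rw [hd]
    by_cases h : ((e m : ℝ)) ∈ Set.Icc (0:ℝ) t
    · simpa [h] using h
    · simp only [h, if_false]
      exact ⟨ht, le_rfl⟩
  have hd_surj : ∀ q : ℚ, (q : ℝ) ∈ Set.Icc (0:ℝ) t → ∃ m, d m = (q : ℝ) := by
    intro q hq
    refine ⟨(Denumerable.eqv ℚ) q, ?_⟩
    have h1 : e ((Denumerable.eqv ℚ) q) = q := by rw [he]; simp
    rw [hd]
    simp only [h1]
    rw [if_pos hq]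
  set F : ℕ → Finset ℝ := fun m => insert 0 (insert t ((Finset.range m).image d)) with hF
  have hF_ne : ∀ m, (F m).Nonempty := fun m => ⟨0, by simp [hF]⟩
  have hF0 : ∀ m, (0:ℝ) ∈ F m := fun m => by simp [hF]
  have hFt : ∀ m, t ∈ F m := fun m => by simp [hF]
  have hF_sub : ∀ m, ∀ x ∈ F m, x ∈ Set.Icc (0:ℝ) t := by
    intro m x hx
    rw [hF] at hx
    simp only [Finset.mem_insert, Finset.mem_image] at hx
    rcases hx with rfl | rfl | ⟨i, _, rfl⟩
    · exact ⟨le_rfl, ht⟩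
    · exact ⟨ht, le_rfl⟩
    · exact hd_mem i
  have hF_mono : ∀ m m', m ≤ m' → F m ⊆ F m' := by
    intro m m' hmm
    rw [hF]
    refine Finset.insert_subset_insert _ (Finset.insert_subset_insert _ ?_)
    exact Finset.image_subset_image (Finset.range_subset_range.2 hmm)
  set c : ℕ → Ω → ℝ := fun m ω => (F m).sup' (hF_ne m) (fun s => |Y s ω|) with hc
  have hcm : ∀ m, Measurable (c m) := by
    intro m
    have h1 : Measurable ((F m).sup' (hF_ne m) fun s => fun ω => |Y s ω|) :=
      Finset.measurable_sup' (hF_ne m) fun s _ => (hmeas s).abs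
    have h2 : c m = (F m).sup' (hF_ne m) fun s => fun ω => |Y s ω| := by
      funext ω
      rw [hc]
      exact (Finset.sup'_apply (hF_ne m) (fun s => fun ω => |Y s ω|) ω).symm
    rw [h2]; exact h1
  have hc_mono : ∀ ω, Monotone fun m => c m ω := by
    intro ω m m' hmm
    exact Finset.sup'_mono _ (hF_mono m m' hmm) (hF_ne m)
  -- per-grid bound
  have hgridbd : ∀ m, ∫⁻ ω, ENNReal.ofReal (Real.exp (c m ω)) ∂P ≤
      8 * ∫⁻ ω, ENNReal.ofReal (Real.exp |Y t ω|) ∂P := by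
    intro m
    obtain ⟨N, u, hmu, hu0, huN, hgeq⟩ := lem_grid t (F m) (hF_ne m) (hF0 m) (hFt m) (hF_sub m)
    have h := lem_twosided P Y hmeas h0 hstat hindep hint hmean u hmu hu0 N
    rw [huN] at h
    refine le_trans (le_of_eq ?_) h
    refine lintegral_congr fun ω => ?_
    congr 2
    exact (hgeq (fun s => |Y s ω|)).symm
  -- pointwise supremum comparison
  have hpt : ∀ ω, ENNReal.ofReal (Real.exp (⨆ s : Set.Icc (0 : ℝ) t, |Y s.1 ω|))
      ≤ ⨆ m : ℕ, ENNReal.ofReal (Real.exp (c m ω)) := by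
    intro ω
    have hne : Nonempty (Set.Icc (0:ℝ) t) := ⟨⟨0, le_rfl, ht⟩⟩
    by_cases hbdd : BddAbove (Set.range fun s : Set.Icc (0:ℝ) t => |Y s.1 ω|)
    · -- bounded case
      set a : ℝ := ⨆ s : Set.Icc (0 : ℝ) t, |Y s.1 ω| with ha
      have hub : ∀ s : Set.Icc (0:ℝ) t, |Y s.1 ω| ≤ a := fun s => le_ciSup hbdd s
      have hcle : ∀ m, c m ω ≤ a := by
        intro m
        refine Finset.sup'_le _ _ fun x hx => hub ⟨x, hF_sub m x hx⟩
      have hbddc : BddAbove (Set.range fun m => c m ω) := ⟨a, by rintro x ⟨m, rfl⟩; exact hcle m⟩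
      set L : ℝ := ⨆ m, c m ω with hL
      have hcL : ∀ m, c m ω ≤ L := fun m => le_ciSup hbddc m
      have htendL : Tendsto (fun m => c m ω) atTop (nhds L) :=
        tendsto_atTop_ciSup (hc_mono ω) hbddc
      -- a ≤ L
      have haL : a ≤ L := by
        have hL0 : 0 ≤ L := le_trans (abs_nonneg (Y 0 ω)) (le_trans
          (Finset.le_sup' (fun s => |Y s ω|) (hF0 0)) (hcL 0))
        refine Real.iSup_le (fun s => ?_) hL0
        rcases eq_or_lt_of_le s.2.2 with hst | hst
        · -- s = t
          have : |Y s.1 ω| ≤ c 0 ω := by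
            have : s.1 = t := hst
            rw [this]
            exact Finset.le_sup' (fun s => |Y s ω|) (hFt 0)
          exact le_trans this (hcL 0)
        · -- s < t : approximate from the right by rationals
          have hs0 : (0:ℝ) ≤ s.1 := s.2.1
          -- choose rational sequence
          have hq : ∀ j : ℕ, ∃ q : ℚ, s.1 < (q:ℝ) ∧ (q:ℝ) < min (s.1 + 1/(j+1)) t := by
            intro j
            refine exists_rat_btwn (lt_min ?_ hst)
            have : (0:ℝ) < 1/(j+1) := by positivity
            linarith
          choose q hq1 hq2 using hq
          have hqt : ∀ j, (q j : ℝ) ≤ t := fun j => (lt_min_iff.1 (hq2 j)).2.le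
          have hq0 : ∀ j, (0:ℝ) ≤ (q j : ℝ) := fun j => le_trans hs0 (hq1 j).le
          have hqL : ∀ j, |Y (q j) ω| ≤ L := by
            intro j
            obtain ⟨m, hm⟩ := hd_surj (q j) ⟨hq0 j, hqt j⟩
            have hmem : ((q j : ℝ)) ∈ F (m+1) := by
              rw [hF]
              simp only [Finset.mem_insert, Finset.mem_image]
              right; right
              exact ⟨m, Finset.mem_range.2 (Nat.lt_succ_self m), hm⟩
            exact le_trans (Finset.le_sup' (fun s => |Y s ω|) hmem) (hcL (m+1))
          -- q j → s.1
          have htq : Tendsto (fun j : ℕ => (q j : ℝ)) atTop (nhds s.1) := by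
            have hupper : Tendsto (fun j : ℕ => s.1 + 1/(j+1:ℝ)) atTop (nhds s.1) := by
              have : Tendsto (fun j : ℕ => 1/(j+1:ℝ)) atTop (nhds 0) :=
                tendsto_one_div_add_atTop_nhds_zero_nat
              simpa using tendsto_const_nhds.add this
            refine tendsto_of_tendsto_of_tendsto_of_le_of_le (g := fun _ => s.1)
              tendsto_const_nhds hupper (fun j => (hq1 j).le)
              (fun j => (lt_min_iff.1 (hq2 j)).1.le)
          -- Y (q j) ω → Y s ω
          have hYc : Tendsto (fun j : ℕ => Y (q j) ω) atTop (nhds (Y s.1 ω)) := by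
            have hwithin : Tendsto (fun j : ℕ => ((q j : ℝ)))
                atTop (nhdsWithin s.1 (Set.Ici s.1)) :=
              tendsto_nhdsWithin_of_tendsto_nhds_of_eventually_within _ htq
                (Eventually.of_forall fun j => (hq1 j).le)
            exact (hrc ω s.1 hs0).tendsto.comp hwithin
          have : Tendsto (fun j : ℕ => |Y (q j) ω|) atTop (nhds |Y s.1 ω|) :=
            (continuous_abs.tendsto _).comp hYc
          exact le_of_tendsto this (Eventually.of_forall hqL)
      -- conclude
      have h1 : ENNReal.ofReal (Real.exp a) ≤ ENNReal.ofReal (Real.exp L) :=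
        ENNReal.ofReal_le_ofReal (Real.exp_le_exp.2 haL)
      refine le_trans h1 ?_
      have htend2 : Tendsto (fun m => ENNReal.ofReal (Real.exp (c m ω))) atTop
          (nhds (ENNReal.ofReal (Real.exp L))) := by
        exact (ENNReal.continuous_ofReal.tendsto _).comp
          ((Real.continuous_exp.tendsto _).comp htendL)
      exact le_of_tendsto htend2 (Eventually.of_forall fun m =>
        le_iSup (fun m => ENNReal.ofReal (Real.exp (c m ω))) m)
    · -- unbounded: the supremum is 0 by convention
      rw [Real.iSup_of_not_bddAbove hbdd]
      refine le_iSup_of_le 0 ?_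
      rw [Real.exp_zero]
      refine ENNReal.ofReal_le_ofReal ?_
      have : (0:ℝ) ≤ c 0 ω :=
        le_trans (abs_nonneg (Y 0 ω)) (Finset.le_sup' (fun s => |Y s ω|) (hF0 0))
      calc (1:ℝ) = Real.exp 0 := Real.exp_zero.symm
        _ ≤ Real.exp (c 0 ω) := Real.exp_le_exp.2 this
  -- assemble with monotone convergence
  calc ∫⁻ ω, ENNReal.ofReal (Real.exp (⨆ s : Set.Icc (0 : ℝ) t, |Y s.1 ω|)) ∂P
      ≤ ∫⁻ ω, ⨆ m : ℕ, ENNReal.ofReal (Real.exp (c m ω)) ∂P := lintegral_mono hpt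
    _ = ⨆ m : ℕ, ∫⁻ ω, ENNReal.ofReal (Real.exp (c m ω)) ∂P := by
        refine lintegral_iSup (fun m => ?_) (fun m m' hmm ω => ?_)
        · exact ENNReal.measurable_ofReal.comp (Real.measurable_exp.comp (hcm m))
        · exact ENNReal.ofReal_le_ofReal (Real.exp_le_exp.2 (hc_mono ω hmm))
    _ ≤ 8 * ∫⁻ ω, ENNReal.ofReal (Real.exp |Y t ω|) ∂P := iSup_le hgridbd
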